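/- arXiv:1104.4584 — 2 statements merged into one kernel-verified Lean document; each statement's English description precedes it below -/
import Mathlib

section
/- In the field ℚ(x,q) of rational functions in two indeterminates x and q, for all nonnegative integers m and n: Σ_{λ ⊆ B(m,n)} x^{dist(λ)} · q^{|λ|} = Σ_{i=0}^{m} q^{i(i+1)/2} · [n choose i]_q · [n+m−i choose m−i]_q · (x−1)^i, where the left-hand sum ranges over all partitions λ fitting in the m×n box B(m,n). -/
/-- The polynomials `T_k(t,q)` defined by `T_0 = 1` and, for `k ≥ 1`,
`T_k = T_{k-1} + (1+t)(-q)^{k²} + (1-t²) ∑_{i=1}^{k-1} (-q)^{k²-i²} T_{i-1}`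
(below the sum is reindexed by `i ↦ i+1`). -/
def T {R : Type*} [CommRing R] (t q : R) : ℕ → R
  | 0 => 1
  | (k+1) => T t q k + (1 + t) * (-q) ^ ((k+1)^2) +
      (1 - t^2) * ∑ i ∈ (Finset.range k).attach,
        (-q) ^ ((k+1)^2 - (i.1+1)^2) * T t q i.1
decreasing_by
  · exact Nat.lt_succ_self k
  · exact Nat.lt_succ_of_lt (Finset.mem_range.mp i.2)

/-- `f n h` with `f 0 0 = 1`, `f 0 h = 0` for `h ≥ 1`, `f n h = 0` for `h < 0`, and
`f n h = (1-q^h) f (n-1) (h-1) + (1-t q^{h+1}) f (n-1) (h+1)`; at `h = 0` the first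
term vanishes since `1 - q^0 = 0`. -/
def f {R : Type*} [CommRing R] (t q : R) : ℕ → ℕ → R
  | 0, h => if h = 0 then 1 else 0
  | (n+1), 0 => (1 - t * q) * f t q n 1
  | (n+1), (h+1) => (1 - q^(h+1)) * f t q n h + (1 - t * q^(h+2)) * f t q n (h+2)

/-- `Ẽ_n(t,q) = f(2n,0)`, which is `(1-q)^{2n}` times the `(t,q)`-Euler number. -/
def Etilde {R : Type*} [CommRing R] (t q : R) (n : ℕ) : R := f t q (2*n) 0

/-- Binomial coefficient with integer lower index, `0` when the lower index is negative. -/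
def binom (n : ℕ) (m : ℤ) : ℤ := if 0 ≤ m then (n.choose m.toNat : ℤ) else 0

/-- q-Pochhammer symbol `(a;q)_n = ∏_{j=0}^{n-1} (1 - a q^j)`. -/
def qPoch {K : Type*} [CommRing K] (a q : K) (n : ℕ) : K :=
  ∏ j ∈ Finset.range n, (1 - a * q ^ j)

/-- Gaussian binomial coefficient `[n choose k]_q = (q;q)_n / ((q;q)_k (q;q)_{n-k})`,
equal to `0` whenever `k < 0` or `k > n`. -/
def gauss {K : Type*} [Field K] (q : K) (n k : ℤ) : K :=
  if 0 ≤ k ∧ k ≤ n then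
    qPoch q q n.toNat / (qPoch q q k.toNat * qPoch q q (n - k).toNat)
  else 0

/-- Number of distinct (positive) part sizes of the partition encoded by an
antitone function `Fin m → Fin (n+1)`. -/
def distCard {m n : ℕ} (g : Fin m → Fin (n+1)) : ℕ :=
  ((Finset.univ.image fun i => ((g i : ℕ))).erase 0).card

/-- `∑_{λ ⊆ B(m,n)} x^{dist(λ)} q^{|λ|}`: partitions in the `m × n` box are encoded
as antitone functions `Fin m → Fin (n+1)`. -/
def boxSum {R : Type*} [CommRing R] (x q : R) (m n : ℕ) : R :=
  ∑ g ∈ Finset.univ.filter (fun g : Fin m → Fin (n+1) => ∀ i j : Fin m, i ≤ j → g j ≤ g i),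
    x ^ distCard g * q ^ (∑ i, (g i : ℕ))

/-- The field `ℚ(x,q)` of rational functions in two indeterminates. -/
abbrev Kxq : Type := FractionRing (MvPolynomial (Fin 2) ℚ)

/-- The indeterminate `x` in `ℚ(x,q)`. -/
noncomputable def xV : Kxq := algebraMap (MvPolynomial (Fin 2) ℚ) Kxq (MvPolynomial.X 0)

/-- The indeterminate `q` in `ℚ(x,q)`. -/
noncomputable def qV : Kxq := algebraMap (MvPolynomial (Fin 2) ℚ) Kxq (MvPolynomial.X 1)


attribute [irreducible] gauss qPoch

section GaussLemmas
variable {K : Type*} [Field K] (q : K) (hq : ∀ k : ℕ, 1 ≤ k → q ^ k ≠ 1)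

lemma qPoch_zero (a : K) : qPoch a q 0 = 1 := by unfold qPoch; simp

lemma qPoch_succ (a : K) (n : ℕ) : qPoch a q (n+1) = qPoch a q n * (1 - a * q ^ n) := by
  unfold qPoch; exact Finset.prod_range_succ _ _

include hq in
lemma qPoch_ne_zero (n : ℕ) : qPoch q q n ≠ 0 := by
  unfold qPoch
  apply Finset.prod_ne_zero_iff.2
  intro j _ h
  apply hq (j+1) (Nat.le_add_left 1 j)
  have : q ^ (j+1) = q * q ^ j := by ring
  rw [this]
  linear_combination -h

lemma gauss_neg (n k : ℤ) (hk : k < 0) : gauss q n k = 0 := by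
  rw [gauss, if_neg]; omega

lemma gauss_of_gt (n k : ℤ) (hk : n < k) : gauss q n k = 0 := by
  rw [gauss, if_neg]; omega

include hq in
lemma gauss_zero_right (n : ℤ) (hn : 0 ≤ n) : gauss q n 0 = 1 := by
  rw [gauss, if_pos (by omega)]
  rw [show (0:ℤ).toNat = 0 from rfl, qPoch_zero, one_mul, sub_zero,
    div_self (qPoch_ne_zero q hq _)]

include hq in
lemma gauss_self (n : ℕ) : gauss q (n : ℤ) (n : ℤ) = 1 := by
  rw [gauss, if_pos (by omega)]
  simp only [sub_self, Int.toNat_zero, Int.toNat_natCast]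
  rw [qPoch_zero, mul_one, div_self (qPoch_ne_zero q hq n)]

include hq in
lemma gauss_pascal (n i : ℕ) (hi : i ≤ n + 1) :
    gauss q ((n:ℤ)+1) (i:ℤ) = gauss q n i + q^(n+1-i) * gauss q (n:ℤ) ((i:ℤ)-1) := by
  rcases Nat.eq_zero_or_pos i with rfl | hpos
  · rw [show ((0:ℕ):ℤ) = 0 from rfl, gauss_neg q n (0-1 : ℤ) (by omega),
      gauss_zero_right q hq _ (by omega), gauss_zero_right q hq _ (by omega)]
    ring
  rcases Nat.lt_or_ge n i with h | hin
  · -- i = n+1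
    have hi' : i = n + 1 := by omega
    subst hi'
    rw [show ((n:ℤ)+1) = (((n+1:ℕ)):ℤ) by push_cast; ring] at *
    rw [gauss_self q hq, gauss_of_gt q n ((n+1:ℕ):ℤ) (by push_cast; omega),
      show (((n+1:ℕ)):ℤ) - 1 = (n:ℤ) by push_cast; ring, gauss_self q hq]
    simp
  · -- 1 ≤ i ≤ n
    rw [gauss, if_pos (by constructor <;> omega)]
    rw [gauss, if_pos (by constructor <;> omega)]
    rw [gauss, if_pos (by constructor <;> omega)]
    have e1 : ((n:ℤ)+1).toNat = n+1 := by omega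
    have e2 : ((n:ℤ)+1 - i).toNat = n+1-i := by omega
    have e3 : ((n:ℤ) - i).toNat = n-i := by omega
    have e4 : ((i:ℤ)-1).toNat = i-1 := by omega
    have e5 : ((n:ℤ) - ((i:ℤ)-1)).toNat = n+1-i := by omega
    rw [e1, e2, e3, e4, e5, Int.toNat_natCast]
    have hP1 : qPoch q q (n+1) = qPoch q q n * (1 - q * q ^ n) := qPoch_succ q q n
    have hPi : qPoch q q i = qPoch q q (i-1) * (1 - q * q ^ (i-1)) := by
      conv_lhs => rw [show i = (i-1)+1 by omega]
      exact qPoch_succ q q (i-1)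
    have hPni : qPoch q q (n+1-i) = qPoch q q (n-i) * (1 - q * q ^ (n-i)) := by
      conv_lhs => rw [show n+1-i = (n-i)+1 by omega]
      exact qPoch_succ q q (n-i)
    have f1 : q * q^(n-i) = q^(n+1-i) := by rw [← pow_succ']; congr 1; omega
    have f2 : q ^ (n+1-i) * q ^ (i-1) = q ^ (n) := by rw [← pow_add]; congr 1; omega
    have main : (1 - q*q^n) = (1 - q*q^(n-i)) + q^(n+1-i)*(1 - q*q^(i-1)) := by
      linear_combination f1 + q*f2
    rw [hP1, hPi, hPni, main]
    have h1 : (1 - q * q ^ (i-1)) ≠ 0 := by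
      intro h; apply hq i hpos
      rw [show i = (i-1)+1 by omega, pow_succ']
      linear_combination -h
    have h2 : (1 - q * q ^ (n-i)) ≠ 0 := by
      intro h; apply hq (n-i+1) (by omega)
      rw [pow_succ']
      linear_combination -h
    have h3 := qPoch_ne_zero q hq (i-1)
    have h4 := qPoch_ne_zero q hq (n-i)
    field_simp
    simp only [Int.toNat_natCast]
    ring


include hq in
lemma gauss_sum (n M : ℕ) :
    gauss q ((n:ℤ)+1+(M:ℤ)) (M:ℤ)
      = ∑ j ∈ Finset.range (M+1), q^((n+1)*(M-j)) * gauss q ((n:ℤ)+(j:ℤ)) (j:ℤ) := by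
  induction M with
  | zero =>
      rw [show (0:ℕ)+1 = 1 from rfl, Finset.sum_range_one]
      rw [show ((n:ℤ)+1+(0:ℕ)) = (((n+1:ℕ)):ℤ) by push_cast; ring,
        show ((0:ℕ):ℤ) = 0 from rfl, gauss_zero_right q hq _ (by positivity),
        show ((n:ℤ)+0) = (n:ℤ) by ring, gauss_zero_right q hq _ (by positivity)]
      norm_num
  | succ M ih =>
      rw [Finset.sum_range_succ]
      have hsum : ∑ j ∈ Finset.range (M+1), q^((n+1)*(M+1-j)) * gauss q ((n:ℤ)+(j:ℤ)) (j:ℤ)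
          = q^(n+1) * ∑ j ∈ Finset.range (M+1), q^((n+1)*(M-j)) * gauss q ((n:ℤ)+(j:ℤ)) (j:ℤ) := by
        rw [Finset.mul_sum]
        apply Finset.sum_congr rfl
        intro j hj
        rw [Finset.mem_range] at hj
        rw [← mul_assoc, ← pow_add]
        congr 2
        have : M + 1 - j = (M - j) + 1 := by omega
        rw [this]
        ring
      rw [hsum, ← ih]
      have hp := gauss_pascal q hq (n+M+1) (M+1) (by omega)
      rw [show (((n+M+1:ℕ)):ℤ)+1 = (n:ℤ)+1+((M+1:ℕ):ℤ) by push_cast; ring] at hp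
      rw [show (((n+M+1:ℕ)):ℤ) = (n:ℤ)+1+((M:ℕ):ℤ) by push_cast; ring] at hp
      rw [show ((M+1:ℕ):ℤ)-1 = (M:ℤ) by push_cast; ring] at hp
      rw [show n+M+1+1-(M+1) = n+1 by omega] at hp
      rw [hp]
      rw [show ((n:ℤ)+((M+1:ℕ):ℤ)) = (n:ℤ)+1+((M:ℕ):ℤ) by push_cast; ring]
      rw [show (n+1)*(M+1-(M+1)) = 0 by rw [Nat.sub_self, mul_zero]]
      ring

include hq in
lemma gauss_pascal' (n i : ℕ) :
    gauss q ((n:ℤ)+1) (i:ℤ) = gauss q n i + q^(n+1-i) * gauss q (n:ℤ) ((i:ℤ)-1) := by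
  rcases le_or_gt i (n+1) with h | h
  · exact gauss_pascal q hq n i h
  · rw [gauss_of_gt q _ _ (by omega), gauss_of_gt q _ _ (by omega),
      gauss_of_gt q _ _ (by omega)]
    ring

include hq in
lemma S1 (n M L : ℕ) (hL : M ≤ L) :
    ∑ k ∈ Finset.range (L+1),
        q^(k*(n+1)) * gauss q ((n:ℤ)+(M:ℤ)-(k:ℤ)) ((M:ℤ)-(k:ℤ))
      = gauss q ((n:ℤ)+1+(M:ℤ)) (M:ℤ) := by
  rw [← Finset.sum_subset (Finset.range_subset_range.2 (show M+1 ≤ L+1 by omega))]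
  · calc ∑ k ∈ Finset.range (M+1),
        q^(k*(n+1)) * gauss q ((n:ℤ)+(M:ℤ)-(k:ℤ)) ((M:ℤ)-(k:ℤ))
        = ∑ k ∈ Finset.range (M+1),
            (fun j => q^((n+1)*(M-j)) * gauss q ((n:ℤ)+(j:ℤ)) (j:ℤ)) (M+1-1-k) := by
          apply Finset.sum_congr rfl
          intro k hk
          rw [Finset.mem_range] at hk
          simp only
          rw [show M+1-1-k = M-k from by omega, show (M - (M - k)) = k from by omega,
            show ((M-k:ℕ):ℤ) = (M:ℤ)-(k:ℤ) from by omega, mul_comm (n+1) k, add_sub_assoc]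
      _ = ∑ j ∈ Finset.range (M+1), q^((n+1)*(M-j)) * gauss q ((n:ℤ)+(j:ℤ)) (j:ℤ) :=
          Finset.sum_range_reflect (fun j => q^((n+1)*(M-j)) * gauss q ((n:ℤ)+(j:ℤ)) (j:ℤ)) (M+1)
      _ = gauss q ((n:ℤ)+1+(M:ℤ)) (M:ℤ) := (gauss_sum q hq n M).symm
  · intro k hk hk2
    rw [Finset.mem_range] at hk hk2
    rw [gauss_neg q _ _ (by omega), mul_zero]

end GaussLemmas

noncomputable def G {K : Type*} [Field K] (x q : K) (m n : ℕ) : K :=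
  ∑ i ∈ Finset.range (m+1),
    q ^ (i*(i+1)/2) * gauss q (n:ℤ) (i:ℤ) * gauss q ((n:ℤ) + m - i) ((m:ℤ) - i) * (x - 1) ^ i

section GLemmas
variable {K : Type*} [Field K] (x q : K) (hq : ∀ k : ℕ, 1 ≤ k → q ^ k ≠ 1)

lemma G_ext (M m n : ℕ) (h : M ≤ m) :
    G x q M n = ∑ i ∈ Finset.range (m+1),
      q ^ (i*(i+1)/2) * gauss q (n:ℤ) (i:ℤ) * gauss q ((n:ℤ) + M - i) ((M:ℤ) - i) * (x - 1) ^ i := by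
  unfold G
  apply Finset.sum_subset (Finset.range_subset_range.2 (by omega))
  intro i hi hi2
  rw [Finset.mem_range] at hi hi2
  rw [show gauss q ((n:ℤ) + M - i) ((M:ℤ) - i) = 0 from gauss_neg q _ _ (by omega)]
  ring

include hq in
lemma S2 (n m i : ℕ) (hi : i ≤ m) :
    ∑ k ∈ Finset.range (m+1), (if k = 0 then 0 else q^(k*(n+1))) *
        gauss q ((n:ℤ)+(m:ℤ)-(k:ℤ)-(i:ℤ)) ((m:ℤ)-(k:ℤ)-(i:ℤ))
      = q^(n+1) * gauss q ((n:ℤ)+(m:ℤ)-(i:ℤ)) ((m:ℤ)-(i:ℤ)-1) := by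
  rcases eq_or_lt_of_le hi with rfl | him
  · rw [gauss_neg q _ _ (by omega), mul_zero]
    apply Finset.sum_eq_zero
    intro k hk
    rcases Nat.eq_zero_or_pos k with rfl | hk0
    · simp
    · rw [if_neg (by omega), gauss_neg q _ _ (by omega), mul_zero]
  · rw [Finset.sum_range_succ']
    rw [if_pos rfl, zero_mul, add_zero]
    calc ∑ k ∈ Finset.range m, (if k + 1 = 0 then 0 else q^((k+1)*(n+1))) *
            gauss q ((n:ℤ)+(m:ℤ)-((k:ℤ)+1)-(i:ℤ)) ((m:ℤ)-((k:ℤ)+1)-(i:ℤ))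
        = ∑ k ∈ Finset.range m, q^(n+1) * (q^(k*(n+1)) *
            gauss q ((n:ℤ)+((m-1-i:ℕ):ℤ)-(k:ℤ)) (((m-1-i:ℕ):ℤ)-(k:ℤ))) := by
          apply Finset.sum_congr rfl
          intro k hk
          rw [Finset.mem_range] at hk
          rw [if_neg (by omega), show (k+1)*(n+1) = (n+1) + k*(n+1) by ring, pow_add,
            show (n:ℤ)+(m:ℤ)-((k:ℤ)+1)-(i:ℤ) = (n:ℤ)+((m-1-i:ℕ):ℤ)-(k:ℤ) by omega,
            show (m:ℤ)-((k:ℤ)+1)-(i:ℤ) = ((m-1-i:ℕ):ℤ)-(k:ℤ) by omega, mul_assoc]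
      _ = q^(n+1) * gauss q ((n:ℤ)+1+((m-1-i:ℕ):ℤ)) ((m-1-i:ℕ):ℤ) := by
          rw [← Finset.mul_sum,
            show Finset.range m = Finset.range ((m-1)+1) from by congr 1; omega,
            S1 q hq n (m-1-i) (m-1) (by omega)]
      _ = q^(n+1) * gauss q ((n:ℤ)+(m:ℤ)-(i:ℤ)) ((m:ℤ)-(i:ℤ)-1) := by
          rw [show (n:ℤ)+1+((m-1-i:ℕ):ℤ) = (n:ℤ)+(m:ℤ)-(i:ℤ) by omega,
            show ((m-1-i:ℕ):ℤ) = (m:ℤ)-(i:ℤ)-1 by omega]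

include hq in
lemma G_rec (m n : ℕ) :
    ∑ k ∈ Finset.range (m+1), (if k = 0 then 1 else x * q^(k*(n+1))) * G x q (m-k) n
      = G x q m (n+1) := by
  have step1 : ∀ k ∈ Finset.range (m+1),
      (if k = 0 then (1:K) else x * q^(k*(n+1))) * G x q (m-k) n
        = ∑ i ∈ Finset.range (m+1), (if k = 0 then (1:K) else x * q^(k*(n+1))) *
            (q ^ (i*(i+1)/2) * gauss q (n:ℤ) (i:ℤ) *
              gauss q ((n:ℤ)+(m:ℤ)-(k:ℤ)-(i:ℤ)) ((m:ℤ)-(k:ℤ)-(i:ℤ)) * (x-1)^i) := by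
    intro k hk
    rw [Finset.mem_range] at hk
    rw [G_ext x q (m-k) m n (by omega), Finset.mul_sum]
    apply Finset.sum_congr rfl
    intro i hi
    rw [show ((n:ℤ)+((m-k:ℕ):ℤ)-(i:ℤ)) = (n:ℤ)+(m:ℤ)-(k:ℤ)-(i:ℤ) from by omega,
      show (((m-k:ℕ):ℤ)-(i:ℤ)) = (m:ℤ)-(k:ℤ)-(i:ℤ) from by omega]
  rw [Finset.sum_congr rfl step1, Finset.sum_comm]
  have step2 : ∀ i ∈ Finset.range (m+1),
      (∑ k ∈ Finset.range (m+1), (if k = 0 then (1:K) else x * q^(k*(n+1))) *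
          (q ^ (i*(i+1)/2) * gauss q (n:ℤ) (i:ℤ) *
            gauss q ((n:ℤ)+(m:ℤ)-(k:ℤ)-(i:ℤ)) ((m:ℤ)-(k:ℤ)-(i:ℤ)) * (x-1)^i))
        = q ^ (i*(i+1)/2) * gauss q (n:ℤ) (i:ℤ) *
            gauss q ((n:ℤ)+1+(m:ℤ)-(i:ℤ)) ((m:ℤ)-(i:ℤ)) * (x-1)^i
          + q ^ (i*(i+1)/2 + (n+1)) * gauss q (n:ℤ) (i:ℤ) *
            gauss q ((n:ℤ)+(m:ℤ)-(i:ℤ)) ((m:ℤ)-(i:ℤ)-1) * (x-1)^(i+1) := by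
    intro i hi
    rw [Finset.mem_range] at hi
    have expand : ∀ k ∈ Finset.range (m+1), (if k = 0 then (1:K) else x * q^(k*(n+1))) *
        (q ^ (i*(i+1)/2) * gauss q (n:ℤ) (i:ℤ) *
          gauss q ((n:ℤ)+(m:ℤ)-(k:ℤ)-(i:ℤ)) ((m:ℤ)-(k:ℤ)-(i:ℤ)) * (x-1)^i)
        = (q ^ (i*(i+1)/2) * gauss q (n:ℤ) (i:ℤ) * (x-1)^i) *
            (q^(k*(n+1)) * gauss q ((n:ℤ)+(m:ℤ)-(k:ℤ)-(i:ℤ)) ((m:ℤ)-(k:ℤ)-(i:ℤ)))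
          + (q ^ (i*(i+1)/2) * gauss q (n:ℤ) (i:ℤ) * (x-1)^i * (x-1)) *
            ((if k = 0 then 0 else q^(k*(n+1))) *
              gauss q ((n:ℤ)+(m:ℤ)-(k:ℤ)-(i:ℤ)) ((m:ℤ)-(k:ℤ)-(i:ℤ))) := by
      intro k _
      rcases Nat.eq_zero_or_pos k with rfl | hk0
      · rw [if_pos rfl, if_pos rfl, show (0*(n+1)) = 0 from Nat.zero_mul _, pow_zero]
        ring
      · rw [if_neg (by omega), if_neg (by omega)]
        ring
    rw [Finset.sum_congr rfl expand, Finset.sum_add_distrib, ← Finset.mul_sum, ← Finset.mul_sum]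
    have hS1 : ∑ k ∈ Finset.range (m+1),
        q^(k*(n+1)) * gauss q ((n:ℤ)+(m:ℤ)-(k:ℤ)-(i:ℤ)) ((m:ℤ)-(k:ℤ)-(i:ℤ))
        = gauss q ((n:ℤ)+1+(m:ℤ)-(i:ℤ)) ((m:ℤ)-(i:ℤ)) := by
      calc ∑ k ∈ Finset.range (m+1),
          q^(k*(n+1)) * gauss q ((n:ℤ)+(m:ℤ)-(k:ℤ)-(i:ℤ)) ((m:ℤ)-(k:ℤ)-(i:ℤ))
          = ∑ k ∈ Finset.range (m+1),
              q^(k*(n+1)) * gauss q ((n:ℤ)+((m-i:ℕ):ℤ)-(k:ℤ)) (((m-i:ℕ):ℤ)-(k:ℤ)) := by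
            apply Finset.sum_congr rfl
            intro k hk
            rw [show (n:ℤ)+(m:ℤ)-(k:ℤ)-(i:ℤ) = (n:ℤ)+((m-i:ℕ):ℤ)-(k:ℤ) from by omega,
              show (m:ℤ)-(k:ℤ)-(i:ℤ) = ((m-i:ℕ):ℤ)-(k:ℤ) from by omega]
        _ = gauss q ((n:ℤ)+1+((m-i:ℕ):ℤ)) ((m-i:ℕ):ℤ) := S1 q hq n (m-i) m (by omega)
        _ = gauss q ((n:ℤ)+1+(m:ℤ)-(i:ℤ)) ((m:ℤ)-(i:ℤ)) := by
            rw [show (n:ℤ)+1+((m-i:ℕ):ℤ) = (n:ℤ)+1+(m:ℤ)-(i:ℤ) from by omega,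
              show ((m-i:ℕ):ℤ) = (m:ℤ)-(i:ℤ) from by omega]
    rw [hS1, S2 q hq n m i (by omega), pow_add]
    ring
  rw [Finset.sum_congr rfl step2, Finset.sum_add_distrib]
  have shift : ∑ i ∈ Finset.range (m+1), q ^ (i*(i+1)/2 + (n+1)) * gauss q (n:ℤ) (i:ℤ) *
        gauss q ((n:ℤ)+(m:ℤ)-(i:ℤ)) ((m:ℤ)-(i:ℤ)-1) * (x-1)^(i+1)
      = ∑ i ∈ Finset.range (m+1), q ^ (i*(i+1)/2) * (q^(n+1-i) * gauss q (n:ℤ) ((i:ℤ)-1)) *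
        gauss q ((n:ℤ)+1+(m:ℤ)-(i:ℤ)) ((m:ℤ)-(i:ℤ)) * (x-1)^i := by
    rw [Finset.sum_range_succ, Finset.sum_range_succ']
    rw [show gauss q ((n:ℤ)+(m:ℤ)-(m:ℤ)) ((m:ℤ)-(m:ℤ)-1) = 0 from gauss_neg q _ _ (by omega)]
    rw [show gauss q (n:ℤ) (((0:ℕ):ℤ)-1) = 0 from gauss_neg q _ _ (by omega)]
    simp only [mul_zero, zero_mul, add_zero]
    apply Finset.sum_congr rfl
    intro i hi
    rw [Finset.mem_range] at hi
    rw [show (n:ℤ)+1+(m:ℤ)-((i+1:ℕ):ℤ) = (n:ℤ)+(m:ℤ)-(i:ℤ) from by push_cast; ring,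
      show (m:ℤ)-((i+1:ℕ):ℤ) = (m:ℤ)-(i:ℤ)-1 from by push_cast; ring,
      show ((i+1:ℕ):ℤ)-1 = (i:ℤ) from by push_cast; ring]
    have hT : (i+1)*(i+1+1)/2 = i*(i+1)/2 + (i+1) := by
      have h2 : (i+1)*(i+1+1) = i*(i+1)+2*(i+1) := by ring
      omega
    rcases le_or_gt i n with hin | hin
    · rw [hT,
        show n+1-(i+1) = n-i from by omega,
        pow_add q (i*(i+1)/2) (n+1), pow_add q (i*(i+1)/2) (i+1),
        show q^(n+1) = q^(i+1) * q^(n-i) from by rw [← pow_add]; congr 1; omega]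
      ring
    · rw [show gauss q (n:ℤ) (i:ℤ) = 0 from gauss_of_gt q _ _ (by omega)]
      ring
  rw [shift, ← Finset.sum_add_distrib]
  unfold G
  apply Finset.sum_congr rfl
  intro i hi
  rw [show (((n+1:ℕ)):ℤ) = (n:ℤ)+1 from by push_cast; ring,
    show (n:ℤ)+1+(m:ℤ)-(i:ℤ) = ((n:ℤ)+1)+(m:ℤ)-(i:ℤ) from by ring,
    gauss_pascal' q hq n i]
  ring

end GLemmas

section Box
variable {R : Type*} [CommRing R] (x q : R)

lemma boxSum_zero (m : ℕ) : boxSum x q m 0 = 1 := by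
  unfold boxSum
  have h0 : ∀ (g : Fin m → Fin 1) (i : Fin m), (g i : ℕ) = 0 := by
    intro g i; omega
  rw [Finset.filter_true_of_mem (fun g _ => by intro i j _; exact le_of_eq (Fin.ext (by omega)))]
  have hterm : ∀ g ∈ (Finset.univ : Finset (Fin m → Fin 1)),
      x ^ distCard g * q ^ (∑ i, (g i : ℕ)) = 1 := by
    intro g _
    have hd : distCard g = 0 := by
      apply Finset.card_eq_zero.2
      apply Finset.eq_empty_of_forall_notMem
      intro a ha
      rw [Finset.mem_erase] at ha
      obtain ⟨hne, hmem⟩ := ha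
      rw [Finset.mem_image] at hmem
      obtain ⟨i, _, rfl⟩ := hmem
      exact hne (h0 g i)
    have hs : (∑ i, (g i : ℕ)) = 0 := Finset.sum_eq_zero (fun i _ => h0 g i)
    rw [hd, hs, pow_zero, pow_zero, one_mul]
  rw [Finset.sum_congr rfl hterm, Finset.sum_const, Finset.card_univ]
  have : Fintype.card (Fin m → Fin 1) = 1 := by
    rw [Fintype.card_fun]
    simp
  rw [this, one_smul]

/-- count of parts equal to the max value `n+1` -/
def cnt {m n : ℕ} (g : Fin m → Fin (n+1+1)) : ℕ :=
  (Finset.univ.filter (fun i => g i = Fin.last (n+1))).card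

lemma card_filter_lt (m k : ℕ) (hk : k ≤ m) :
    (Finset.univ.filter (fun i : Fin m => i.val < k)).card = k := by
  have heq : (Finset.univ.filter (fun i : Fin m => i.val < k)).card = (Finset.range k).card := by
    apply Finset.card_bij (fun i _ => i.val)
    · intro a ha
      rw [Finset.mem_filter] at ha
      rw [Finset.mem_range]
      exact ha.2
    · intro a ha b hb hab
      exact Fin.ext hab
    · intro b hb
      rw [Finset.mem_range] at hb
      exact ⟨⟨b, by omega⟩, Finset.mem_filter.2 ⟨Finset.mem_univ _, hb⟩, rfl⟩
  rw [heq, Finset.card_range]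

lemma struct {m n k : ℕ} (g : Fin m → Fin (n+1+1))
    (hg : ∀ i j : Fin m, i ≤ j → g j ≤ g i) (hc : cnt g = k) :
    ∀ i : Fin m, g i = Fin.last (n+1) ↔ i.val < k := by
  intro i
  constructor
  · intro hi
    have hsub : Finset.Iic i ⊆ Finset.univ.filter (fun j => g j = Fin.last (n+1)) := by
      intro j hj
      rw [Finset.mem_Iic] at hj
      refine Finset.mem_filter.2 ⟨Finset.mem_univ _, le_antisymm (Fin.le_last _) ?_⟩
      rw [← hi]
      exact hg j i hj
    have := Finset.card_le_card hsub
    rw [Fin.card_Iic] at this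
    unfold cnt at hc
    omega
  · intro hik
    by_contra hne
    have hsub : Finset.univ.filter (fun j => g j = Fin.last (n+1)) ⊆ Finset.Iio i := by
      intro j hj
      rw [Finset.mem_filter] at hj
      rw [Finset.mem_Iio]
      by_contra hij
      push_neg at hij
      exact hne (le_antisymm (Fin.le_last _) (hj.2 ▸ hg i j hij))
    have := Finset.card_le_card hsub
    rw [Fin.card_Iio] at this
    unfold cnt at hc
    omega

def toShort {m n : ℕ} (k : ℕ) (g : Fin m → Fin (n+1+1)) : Fin (m-k) → Fin (n+1) :=
  fun i => ⟨min (g ⟨i.val + k, by omega⟩).val n, by omega⟩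

def toLong {m n : ℕ} (k : ℕ) (g' : Fin (m-k) → Fin (n+1)) : Fin m → Fin (n+1+1) :=
  fun i => if h : i.val < k then Fin.last (n+1) else (g' ⟨i.val - k, by omega⟩).castSucc

lemma val_le_n {m n k : ℕ} {g : Fin m → Fin (n+1+1)}
    (hg : ∀ i j : Fin m, i ≤ j → g j ≤ g i) (hc : cnt g = k)
    {i : Fin m} (hik : ¬ i.val < k) : (g i : ℕ) ≤ n := by
  have h := struct g hg hc i
  have hne : g i ≠ Fin.last (n+1) := fun he => hik (h.1 he)
  have hv : (g i : ℕ) ≠ n+1 := by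
    intro hv
    exact hne (Fin.ext (by rw [hv, Fin.val_last]))
  have := (g i).isLt
  omega

lemma toShort_val {m n k : ℕ} (g : Fin m → Fin (n+1+1)) (j : Fin (m-k)) (hj : j.val + k < m) :
    (toShort k g j : ℕ) = min (g ⟨j.val + k, hj⟩ : ℕ) n := rfl

lemma sum_split {m n k : ℕ} (hk : k ≤ m) (g : Fin m → Fin (n+1+1))
    (hg : ∀ i j : Fin m, i ≤ j → g j ≤ g i) (hc : cnt g = k) :
    (∑ i, (g i : ℕ)) = k*(n+1) + ∑ i, ((toShort k g i : ℕ)) := by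
  rw [← Finset.sum_filter_add_sum_filter_not Finset.univ (fun i : Fin m => i.val < k)
    (fun i => ((g i : ℕ)))]
  have h1 : ∑ i ∈ Finset.univ.filter (fun i : Fin m => i.val < k), (g i : ℕ) = k*(n+1) := by
    rw [Finset.sum_congr rfl (fun i hi => ?_), Finset.sum_const, card_filter_lt m k hk,
      smul_eq_mul]
    rw [Finset.mem_filter] at hi
    rw [(struct g hg hc i).2 hi.2, Fin.val_last]
  rw [h1]
  congr 1
  refine Finset.sum_bij'
    (fun (a : Fin m) (ha : a ∈ Finset.univ.filter (fun i : Fin m => ¬ i.val < k)) =>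
      (⟨a.val - k, by have := (Finset.mem_filter.1 ha).2; omega⟩ : Fin (m-k)))
    (fun (b : Fin (m-k)) (_ : b ∈ Finset.univ) => (⟨b.val + k, by omega⟩ : Fin m))
    (fun a ha => Finset.mem_univ _)
    (fun b hb => Finset.mem_filter.2 ⟨Finset.mem_univ _, show ¬ b.val + k < k by omega⟩)
    (fun a ha => ?_) (fun b hb => ?_) (fun a ha => ?_)
  · have := (Finset.mem_filter.1 ha).2
    exact Fin.ext (show a.val - k + k = a.val by omega)
  · exact Fin.ext (show b.val + k - k = b.val by omega)
  · have h2 := (Finset.mem_filter.1 ha).2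
    have hj : (⟨a.val - k, by have := (Finset.mem_filter.1 ha).2; omega⟩ : Fin (m-k)).val + k < m := by
      show a.val - k + k < m
      omega
    rw [toShort_val g _ hj]
    have heq : (⟨(⟨a.val - k, by have := (Finset.mem_filter.1 ha).2; omega⟩ : Fin (m-k)).val + k,
        hj⟩ : Fin m) = a := Fin.ext (show a.val - k + k = a.val by omega)
    rw [heq]
    have hle : (g a : ℕ) ≤ n := val_le_n hg hc h2
    omega

lemma dist_split {m n k : ℕ} (hk : k ≤ m) (g : Fin m → Fin (n+1+1))
    (hg : ∀ i j : Fin m, i ≤ j → g j ≤ g i) (hc : cnt g = k) :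
    distCard g = (if k = 0 then 0 else 1) + distCard (toShort k g) := by
  unfold distCard
  rcases Nat.eq_zero_or_pos k with rfl | hpos
  · rw [if_pos rfl, zero_add]
    congr 2
    apply Finset.image_congr
    intro i _
    have hle : (g i : ℕ) ≤ n := val_le_n hg hc (show ¬ i.val < 0 by omega)
    show (g i : ℕ) = min (g i : ℕ) n
    omega
  · rw [if_neg (by omega)]
    have himg : (Finset.univ.image fun i => ((g i : ℕ)))
        = insert (n+1) (Finset.univ.image fun i => ((toShort k g i : ℕ))) := by
      apply Finset.Subset.antisymm
      · intro a ha
        rw [Finset.mem_image] at ha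
        obtain ⟨i, _, rfl⟩ := ha
        rcases Nat.lt_or_ge i.val k with hik | hik
        · rw [(struct g hg hc i).2 hik, Fin.val_last]
          exact Finset.mem_insert_self _ _
        · apply Finset.mem_insert_of_mem
          rw [Finset.mem_image]
          have hb : i.val - k < m - k := by omega
          refine ⟨⟨i.val - k, hb⟩, Finset.mem_univ _, ?_⟩
          have hj : (⟨i.val - k, hb⟩ : Fin (m-k)).val + k < m := by
            show i.val - k + k < m
            omega
          rw [toShort_val g _ hj,
            show (⟨(⟨i.val - k, hb⟩ : Fin (m-k)).val + k, hj⟩ : Fin m) = i from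
              Fin.ext (show i.val - k + k = i.val by omega)]
          have hle : (g i : ℕ) ≤ n := val_le_n hg hc (by omega)
          omega
      · intro a ha
        rw [Finset.mem_insert] at ha
        rcases ha with rfl | ha
        · rw [Finset.mem_image]
          refine ⟨⟨0, by omega⟩, Finset.mem_univ _, ?_⟩
          rw [(struct g hg hc _).2 (show (0:ℕ) < k by omega), Fin.val_last]
        · rw [Finset.mem_image] at ha ⊢
          obtain ⟨i, _, rfl⟩ := ha
          have hj : i.val + k < m := by omega
          refine ⟨⟨i.val + k, hj⟩, Finset.mem_univ _, ?_⟩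
          rw [toShort_val g i hj]
          have hle : (g (⟨i.val + k, hj⟩ : Fin m) : ℕ) ≤ n :=
            val_le_n hg hc (show ¬ i.val + k < k by omega)
          omega
    rw [himg]
    have hnot : (n+1) ∉ (Finset.univ.image fun i => ((toShort k g i : ℕ))) := by
      intro hmem
      rw [Finset.mem_image] at hmem
      obtain ⟨i, _, hi⟩ := hmem
      have hj : i.val + k < m := by omega
      rw [toShort_val g i hj] at hi
      omega
    rw [Finset.erase_insert_of_ne (by omega)]
    rw [Finset.card_insert_of_notMem (fun hmem => hnot (Finset.mem_of_mem_erase hmem))]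
    omega

lemma toShort_anti {m n k : ℕ} (g : Fin m → Fin (n+1+1))
    (hg : ∀ i j : Fin m, i ≤ j → g j ≤ g i) :
    ∀ i j : Fin (m-k), i ≤ j → toShort k g j ≤ toShort k g i := by
  intro i j hij
  rw [Fin.le_def] at hij ⊢
  have hj : j.val + k < m := by omega
  have hi : i.val + k < m := by omega
  have h1 : g ⟨j.val+k, hj⟩ ≤ g ⟨i.val+k, hi⟩ := hg _ _ (by rw [Fin.le_def]; show i.val + k ≤ j.val + k; omega)
  rw [Fin.le_def] at h1
  rw [toShort_val g j hj, toShort_val g i hi]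
  have := h1
  omega

lemma toLong_last_iff {m n k : ℕ} (g' : Fin (m-k) → Fin (n+1)) (i : Fin m) :
    toLong k g' i = Fin.last (n+1) ↔ i.val < k := by
  unfold toLong
  rcases Nat.lt_or_ge i.val k with h | h
  · rw [dif_pos h]
    simp [h]
  · rw [dif_neg (by omega)]
    constructor
    · intro hcs
      exact absurd hcs (ne_of_lt (Fin.castSucc_lt_last _))
    · omega

lemma toLong_cnt {m n k : ℕ} (hk : k ≤ m) (g' : Fin (m-k) → Fin (n+1)) :
    cnt (toLong k g') = k := by
  unfold cnt
  rw [Finset.filter_congr (fun i _ => by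
    rw [show ((toLong k g' i = Fin.last (n+1)) = (i.val < k)) from
      propext (toLong_last_iff g' i)])]
  exact card_filter_lt m k hk

lemma toLong_anti {m n k : ℕ} (g' : Fin (m-k) → Fin (n+1))
    (hg' : ∀ i j : Fin (m-k), i ≤ j → g' j ≤ g' i) :
    ∀ i j : Fin m, i ≤ j → toLong k g' j ≤ toLong k g' i := by
  intro i j hij
  rw [Fin.le_def] at hij
  unfold toLong
  rcases Nat.lt_or_ge i.val k with hi | hi
  · rw [dif_pos hi]
    exact Fin.le_last _
  · rw [dif_neg (by omega), dif_neg (by omega)]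
    have : g' ⟨j.val - k, by omega⟩ ≤ g' ⟨i.val - k, by omega⟩ :=
      hg' _ _ (by rw [Fin.le_def]; show i.val - k ≤ j.val - k; omega)
    rw [Fin.le_def] at this ⊢
    exact this

lemma long_short {m n k : ℕ} (g : Fin m → Fin (n+1+1))
    (hg : ∀ i j : Fin m, i ≤ j → g j ≤ g i) (hc : cnt g = k) :
    toLong k (toShort k g) = g := by
  funext i
  unfold toLong
  rcases Nat.lt_or_ge i.val k with hi | hi
  · rw [dif_pos hi]
    exact ((struct g hg hc i).2 hi).symm
  · rw [dif_neg (by omega)]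
    apply Fin.ext
    rw [Fin.coe_castSucc]
    have hj : (⟨i.val - k, by omega⟩ : Fin (m-k)).val + k < m := by
      show i.val - k + k < m
      omega
    rw [toShort_val g _ hj,
      show (⟨(⟨i.val - k, by omega⟩ : Fin (m-k)).val + k, hj⟩ : Fin m) = i from
        Fin.ext (show i.val - k + k = i.val by omega)]
    have hle : (g i : ℕ) ≤ n := val_le_n hg hc (by omega)
    omega

lemma short_long {m n k : ℕ} (g' : Fin (m-k) → Fin (n+1)) :
    toShort k (toLong k g') = g' := by
  funext i
  apply Fin.ext
  have hj : i.val + k < m := by omega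
  rw [toShort_val (toLong k g') i hj]
  unfold toLong
  rw [dif_neg (show ¬ (⟨i.val + k, hj⟩ : Fin m).val < k from by show ¬ i.val + k < k; omega)]
  rw [show (⟨(⟨i.val + k, hj⟩ : Fin m).val - k, by omega⟩ : Fin (m-k)) = i from
    Fin.ext (show i.val + k - k = i.val by omega)]
  rw [Fin.coe_castSucc]
  have := (g' i).isLt
  omega

lemma inner (m n k : ℕ) (hk : k ≤ m) :
    ∑ g ∈ (Finset.univ.filter
        (fun g : Fin m → Fin (n+1+1) => ∀ i j : Fin m, i ≤ j → g j ≤ g i)).filter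
        (fun g => cnt g = k),
      x ^ distCard g * q ^ (∑ i, (g i : ℕ))
    = (if k = 0 then 1 else x * q^(k*(n+1))) * boxSum x q (m-k) n := by
  rw [boxSum, Finset.mul_sum]
  refine Finset.sum_bij' (fun g _ => toShort k g) (fun g' _ => toLong k g')
    ?_ ?_ ?_ ?_ ?_
  · intro g hg
    rw [Finset.mem_filter, Finset.mem_filter] at hg
    exact Finset.mem_filter.2 ⟨Finset.mem_univ _, toShort_anti g hg.1.2⟩
  · intro g' hg'
    rw [Finset.mem_filter] at hg'
    refine Finset.mem_filter.2 ⟨Finset.mem_filter.2 ⟨Finset.mem_univ _, toLong_anti g' hg'.2⟩, ?_⟩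
    exact toLong_cnt hk g'
  · intro g hg
    rw [Finset.mem_filter, Finset.mem_filter] at hg
    exact long_short g hg.1.2 hg.2
  · intro g' hg'
    exact short_long g'
  · intro g hg
    rw [Finset.mem_filter, Finset.mem_filter] at hg
    rw [dist_split hk g hg.1.2 hg.2, sum_split hk g hg.1.2 hg.2, pow_add, pow_add]
    rcases Nat.eq_zero_or_pos k with rfl | hpos
    · rw [if_pos rfl, if_pos rfl, pow_zero]
      ring
    · rw [if_neg (by omega), if_neg (by omega), pow_one]
      ring

lemma boxSum_rec (m n : ℕ) :
    boxSum x q m (n+1)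
      = ∑ k ∈ Finset.range (m+1), (if k = 0 then 1 else x * q^(k*(n+1))) * boxSum x q (m-k) n := by
  rw [show boxSum x q m (n+1) = ∑ g ∈ (Finset.univ.filter
      (fun g : Fin m → Fin (n+1+1) => ∀ i j : Fin m, i ≤ j → g j ≤ g i)),
      x ^ distCard g * q ^ (∑ i, (g i : ℕ)) from rfl]
  rw [← Finset.sum_fiberwise_of_maps_to (g := cnt) (t := Finset.range (m+1)) (fun g _ => by
    rw [Finset.mem_range]
    have : cnt g ≤ m := le_trans (Finset.card_filter_le _ _) (by rw [Finset.card_univ]; simp)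
    omega)]
  apply Finset.sum_congr rfl
  intro k hkr
  rw [Finset.mem_range] at hkr
  exact inner x q m n k (by omega)

end Box


section GZero
variable {K : Type*} [Field K] (x q : K) (hq : ∀ k : ℕ, 1 ≤ k → q ^ k ≠ 1)

include hq in
lemma G_zero (m : ℕ) : G x q m 0 = 1 := by
  unfold G
  rw [Finset.sum_eq_single 0]
  · rw [show ((0:ℕ):ℤ) = 0 from rfl, gauss_zero_right q hq 0 le_rfl,
      show (0:ℤ) + (m:ℤ) - 0 = ((m:ℕ):ℤ) from by push_cast; ring,
      show (m:ℤ) - (0:ℤ) = ((m:ℕ):ℤ) from by push_cast; ring,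
      gauss_self q hq m]
    norm_num
  · intro i hi hne
    rw [show gauss q ((0:ℕ):ℤ) (i:ℤ) = 0 from gauss_of_gt q _ _ (by omega)]
    ring
  · intro h
    exact absurd (Finset.mem_range.2 (by omega)) h

end GZero

lemma hqV : ∀ k : ℕ, 1 ≤ k → qV ^ k ≠ 1 := by
  intro k hk h
  have hinj : Function.Injective (algebraMap (MvPolynomial (Fin 2) ℚ) Kxq) :=
    IsFractionRing.injective _ _
  rw [qV, ← map_pow, show (1 : Kxq) = algebraMap (MvPolynomial (Fin 2) ℚ) Kxq 1 from
    (map_one _).symm] at h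
  have h2 := hinj h
  have heval := congrArg (MvPolynomial.eval (fun _ => (0:ℚ))) h2
  rw [map_pow, MvPolynomial.eval_X, map_one, zero_pow (by omega)] at heval
  exact absurd heval (by norm_num)

theorem stmt_8 (m n : ℕ) :
    boxSum xV qV m n =
      ∑ i ∈ Finset.range (m+1),
        qV ^ (i*(i+1)/2) * gauss qV (n:ℤ) (i:ℤ) * gauss qV ((n:ℤ) + m - i) ((m:ℤ) - i) *
          (xV - 1) ^ i := by
  have h : ∀ m, boxSum xV qV m n = G xV qV m n := by
    induction n with
    | zero =>
        intro m
        rw [boxSum_zero, G_zero xV qV hqV m]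
    | succ n ih =>
        intro m
        rw [boxSum_rec, Finset.sum_congr rfl (fun k _ => by rw [ih]),
          G_rec xV qV hqV m n]
  rw [h m]
  rfl
end

section
/- Let q be an element of a commutative ring. For every integer n ≥ 0, Ẽ_n(0, q) = Σ_{k=0}^{n} (binom(2n, n−k) − binom(2n, n−k−1)) · (−1)^k · q^{k(k+1)/2}, where binom denotes the ordinary binomial coefficient (with binom(2n, m) = 0 for m < 0). (This is the Touchard–Riordan formula: Ẽ_n(0,q) equals (1−q)^n times the nth coefficient d_n of the S-fraction with coefficients [n]_q.) -/
/-! ### Auxiliary machinery for the Touchard–Riordan formula -/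

section Aux
variable {R : Type*} [CommRing R]

/-- `binom` cast into a commutative ring. -/
def B (R : Type*) [CommRing R] (n : ℕ) (m : ℤ) : R := ((binom n m : ℤ) : R)

lemma binom_neg' {n : ℕ} {m : ℤ} (h : m < 0) : binom n m = 0 := by
  simp [binom, not_le.mpr h]

lemma binom_lt' {n : ℕ} {m : ℤ} (h : (n:ℤ) < m) : binom n m = 0 := by
  have h0 : 0 ≤ m := le_trans (Int.ofNat_nonneg n) h.le
  simp only [binom, if_pos h0]
  have : n < m.toNat := by omega
  simp [Nat.choose_eq_zero_of_lt this]

lemma binom_succ (n : ℕ) (m : ℤ) : binom (n+1) m = binom n (m-1) + binom n m := by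
  rcases lt_trichotomy m 0 with hm | hm | hm
  · rw [binom_neg' hm, binom_neg' (by omega), binom_neg' (by omega)]; ring
  · subst hm; simp [binom, binom_neg' (show (-1:ℤ) < 0 by norm_num)]
  · have h0 : 0 ≤ m := hm.le
    have h1 : 0 ≤ m - 1 := by omega
    simp only [binom, if_pos h0, if_pos h1]
    obtain ⟨k, hk⟩ : ∃ k : ℕ, m = (k : ℤ) + 1 := ⟨(m-1).toNat, by omega⟩
    subst hk
    have e1 : ((k:ℤ)+1).toNat = k + 1 := by omega
    have e2 : ((k:ℤ)+1-1).toNat = k := by omega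
    rw [e1, e2, Nat.choose_succ_succ]
    push_cast; ring

lemma binom_symm' {n : ℕ} {m : ℤ} (h0 : 0 ≤ m) (h : m ≤ n) :
    binom n m = binom n ((n:ℤ) - m) := by
  simp only [binom, if_pos h0, if_pos (show (0:ℤ) ≤ n - m by omega)]
  obtain ⟨k, rfl⟩ : ∃ k : ℕ, m = (k:ℤ) := ⟨m.toNat, by omega⟩
  have e : ((n:ℤ) - k).toNat = n - k := by omega
  rw [e, Int.toNat_natCast, Nat.choose_symm (by omega)]

lemma B_neg {n : ℕ} {m : ℤ} (h : m < 0) : (B R n m) = 0 := by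
  simp [B, binom_neg' h]

lemma B_succ (n : ℕ) (m : ℤ) : B R (n+1) m = B R n (m-1) + B R n m := by
  simp [B, binom_succ]

lemma B_symm {n : ℕ} {m : ℤ} (h0 : 0 ≤ m) (h : m ≤ n) :
    B R n m = B R n ((n:ℤ) - m) := by
  simp [B, binom_symm' h0 h]

/-- Partial products `∏_{j=0}^{m-1} (1 - q^{a+j})`. -/
def Pp (q : R) (a m : ℕ) : R := ∏ j ∈ Finset.range m, (1 - q^(a+j))

lemma Pp_zero (q : R) (a : ℕ) : Pp q a 0 = 1 := by simp [Pp]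

lemma Pp_last (q : R) (a m : ℕ) : Pp q a (m+1) = Pp q a m * (1 - q^(a+m)) := by
  rw [Pp, Finset.prod_range_succ]; rfl

lemma Pp_first (q : R) (a m : ℕ) : Pp q a (m+1) = (1 - q^a) * Pp q (a+1) m := by
  induction m with
  | zero => simp [Pp]
  | succ m ih =>
    rw [Pp_last, ih, Pp_last, show a+(m+1) = a+1+m by omega]; ring

/-- Coefficients in the closed formula for `f` at `t = 0`. -/
def A (q : R) (h k : ℕ) : R :=
  if h = 0 then
    (if k = 0 then 1 else (-1)^k * (q^(k*(k+1)/2) + q^(k*(k-1)/2)))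
  else (-1)^k * q^(k*(k-1)/2) * (1 - q^(2*k+h)) * Pp q (k+1) (h-1)

lemma A_succ (q : R) (h k : ℕ) :
    A q (h+1) k = (-1)^k * q^(k*(k-1)/2) * (1 - q^(2*k+(h+1))) * Pp q (k+1) h := by
  simp [A]

lemma A00 (q : R) : A q 0 0 = 1 := by simp [A]

lemma A0_succ (q : R) (k : ℕ) :
    A q 0 (k+1) = (-1)^(k+1) * (q^((k+1)*(k+2)/2) + q^((k+1)*k/2)) := by
  simp [A]

lemma tri (k : ℕ) : (k+1)*k/2 = k*(k-1)/2 + k := by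
  cases k with
  | zero => rfl
  | succ j =>
    rw [Nat.add_sub_cancel]
    have h1 : (j+1+1)*(j+1) = (j+1)*j + 2*(j+1) := by ring
    have h2 : 2 ∣ (j+1)*j := by
      rw [mul_comm]; exact (Nat.even_mul_succ_self j).two_dvd
    omega

lemma key0 (q : R) (h : ℕ) : A q (h+1) 0 = (1 - q^(h+1)) * A q h 0 := by
  rcases h with _ | h
  · rw [A_succ, A00]; simp [Pp]
  · rw [A_succ, A_succ, Pp_last]
    ring

lemma key1 (q : R) (h k : ℕ) :
    A q (h+1) (k+1) + A q (h+1) k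
      = (1 - q^(h+1)) * A q h (k+1) + A q (h+2) k := by
  have e1 : (k+1)*(k+1-1)/2 = k*(k-1)/2 + k := by
    rw [Nat.add_sub_cancel]; exact tri k
  rcases h with _ | h
  · rw [show (0:ℕ)+1 = 1 from rfl, show (0:ℕ)+2 = 1+1 from rfl,
      A_succ q 0, A_succ q 0, A_succ q 1, A0_succ, e1]
    have e2 : (k+1)*(k+2)/2 = k*(k-1)/2 + k + (k+1) := by
      have := tri (k+1)
      rw [Nat.add_sub_cancel, tri k] at this
      rw [show (k+1)*(k+2) = (k+1+1)*(k+1) from by ring]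
      exact this
    have e3 : (k+1)*k/2 = k*(k-1)/2 + k := tri k
    rw [e2, e3]
    simp only [Pp_first, Pp_zero, mul_one]
    simp only [pow_add]
    ring
  · rw [show h+1+1 = (h+1)+1 from rfl, show h+1+2 = (h+2)+1 from rfl,
      A_succ q (h+1) (k+1), A_succ q (h+1) k, A_succ q h (k+1), A_succ q (h+2) k, e1]
    rw [Pp_last q (k+1+1) h,
        Pp_first q (k+1) h,
        Pp_first q (k+1) (h+1),
        Pp_last q (k+1+1) h]
    simp only [pow_add]
    ring

lemma key01 (q : R) (k : ℕ) :
    A q 1 k = A q 0 (k+1) + A q 0 k + (if k = 0 then 1 else 0) := by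
  rcases k with _ | k
  · rw [show (1:ℕ) = 0+1 from rfl, A_succ, A0_succ, A00]
    simp [Pp_zero]
    ring
  · rw [show (1:ℕ) = 0+1 from rfl, A_succ, A0_succ, A0_succ, Pp_zero,
      if_neg (Nat.succ_ne_zero k)]
    have e1 : (k+1)*(k+1-1)/2 = k*(k-1)/2 + k := by
      rw [Nat.add_sub_cancel]; exact tri k
    have e3 : (k+2)*(k+1)/2 = k*(k-1)/2 + k + (k+1) := by
      have t2 := tri (k+1)
      rw [Nat.add_sub_cancel, tri k] at t2
      rw [show (k+2)*(k+1) = (k+1+1)*(k+1) from by ring, t2]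
    have e2 : (k+2)*(k+3)/2 = k*(k-1)/2 + k + (k+1) + (k+2) := by
      have t1 := tri (k+2)
      rw [show k+2-1 = k+1 by omega,
        show (k+2)*(k+1) = (k+1)*(k+2) from by ring] at t1
      rw [show (k+2)*(k+3) = (k+2+1)*(k+2) from by ring, t1,
        show (k+1)*(k+2) = (k+2)*(k+1) from by ring, e3]
    have e4 : (k+1)*(k+2)/2 = k*(k-1)/2 + k + (k+1) := by
      rw [show (k+1)*(k+2) = (k+2)*(k+1) from by ring, e3]
    have e5 : (k+1)*k/2 = k*(k-1)/2 + k := tri k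
    rw [e1, e2, e3, e4, e5]
    simp only [pow_add]
    ring

lemma sum_step (q : R) (c : ℕ → R) (n : ℕ) (m : ℤ) (hm : 2*m ≤ (n:ℤ)+1) :
    ∑ k ∈ Finset.range (n+2), c k * B R (n+1) (m - k)
      = c 0 * B R n m + ∑ k ∈ Finset.range (n+1), (c (k+1) + c k) * B R n (m - 1 - k) := by
  calc ∑ k ∈ Finset.range (n+2), c k * B R (n+1) (m - k)
      = ∑ k ∈ Finset.range (n+2),
          (c k * B R n (m - 1 - k) + c k * B R n (m - k)) := by
        refine Finset.sum_congr rfl fun k _ => ?_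
        rw [B_succ, show m - (k:ℤ) - 1 = m - 1 - k by ring]
        ring
    _ = (∑ k ∈ Finset.range (n+2), c k * B R n (m - 1 - k))
        + ∑ k ∈ Finset.range (n+2), c k * B R n (m - k) := Finset.sum_add_distrib
    _ = (∑ k ∈ Finset.range (n+1), c k * B R n (m - 1 - k))
        + (c 0 * B R n m + ∑ k ∈ Finset.range (n+1), c (k+1) * B R n (m - 1 - k)) := by
        congr 1
        · rw [Finset.sum_range_succ]
          have hz : B R n (m - 1 - ((n+1 : ℕ) : ℤ)) = 0 :=
            B_neg (by push_cast; omega)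
          rw [hz, mul_zero, add_zero]
        · rw [Finset.sum_range_succ' (fun k => c k * B R n (m - k)) (n+1), add_comm]
          congr 1
          · norm_num
          · refine Finset.sum_congr rfl fun k _ => ?_
            congr 2
            push_cast; ring
    _ = c 0 * B R n m + ∑ k ∈ Finset.range (n+1), (c (k+1) + c k) * B R n (m - 1 - k) := by
        have hsplit : ∑ k ∈ Finset.range (n+1), (c (k+1) + c k) * B R n (m - 1 - k)
            = (∑ k ∈ Finset.range (n+1), c (k+1) * B R n (m - 1 - k))
              + ∑ k ∈ Finset.range (n+1), c k * B R n (m - 1 - k) := by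
          rw [← Finset.sum_add_distrib]
          exact Finset.sum_congr rfl fun k _ => add_mul _ _ _
        rw [hsplit]; ring

lemma sum_peel (q : R) (c : ℕ → R) (n : ℕ) (m : ℤ) (hm : 2*m ≤ (n:ℤ)+1) :
    ∑ k ∈ Finset.range (n+1), c k * B R n (m - k)
      = c 0 * B R n m + ∑ k ∈ Finset.range (n+1), c (k+1) * B R n (m - 1 - k) := by
  rw [Finset.sum_range_succ' (fun k => c k * B R n (m - k)) n, add_comm]
  congr 1
  · norm_num
  · rw [Finset.sum_range_succ (fun k => c (k+1) * B R n (m - 1 - k)) n]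
    have hz : B R n (m - 1 - (n : ℤ)) = 0 := B_neg (by omega)
    rw [hz, mul_zero, add_zero]
    refine Finset.sum_congr rfl fun k _ => ?_
    congr 2
    push_cast; ring

/-- The main closed formula: for `n - h = 2m`,
`f(n,h)|_{t=0} = ∑_k A(h,k) · binom(n, m-k)`. -/
lemma mainf (q : R) : ∀ (n h : ℕ) (m : ℤ), (n:ℤ) - h = 2*m →
    f 0 q n h = ∑ k ∈ Finset.range (n+1), A q h k * B R n (m - k) := by
  intro n
  induction n with
  | zero =>
    intro h m hm
    rcases h with _ | h
    · have hm0 : m = 0 := by omega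
      subst hm0
      simp [f, A00, B, binom, Finset.sum_range_one]
    · have hB : B R 0 m = 0 := B_neg (by omega)
      simp [f, hB]
  | succ n ih =>
    intro h m hm
    have hm' : ((n+1 : ℕ):ℤ) - h = 2*m := hm
    rcases h with _ | h
    · -- h = 0 :  n + 1 = 2m
      have hn2m : (n:ℤ) + 1 = 2*m := by push_cast at hm'; omega
      have hm1 : 1 ≤ m := by omega
      have hf : f (0:R) q (n+1) 0 = f 0 q n 1 := by simp [f]
      rw [hf, ih 1 (m-1) (by push_cast; omega)]
      rw [sum_step q (A q 0) n m (by omega)]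
      have hterm : ∀ k ∈ Finset.range (n+1),
          A q 1 k * B R n (m - 1 - k)
            = (A q 0 (k+1) + A q 0 k) * B R n (m - 1 - k)
              + (if k = 0 then B R n (m-1) else 0) := by
        intro k _
        rw [key01]
        rcases Nat.eq_zero_or_pos k with rfl | hk
        · simp; ring
        · rw [if_neg hk.ne', if_neg hk.ne']
          ring
      rw [Finset.sum_congr rfl hterm, Finset.sum_add_distrib,
        Finset.sum_ite_eq' (Finset.range (n+1)) 0 (fun _ => B R n (m-1)),
        if_pos (Finset.mem_range.mpr (Nat.succ_pos n))]
      have hBsymm : B R n m = B R n (m-1) := by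
        rw [B_symm (by omega) (by omega), show (n:ℤ) - m = m - 1 by omega]
      rw [A00, hBsymm]
      ring
    · -- h + 1 ≥ 1
      have h2m : (n:ℤ) - h = 2*m := by push_cast at hm' ⊢; omega
      have hf : f (0:R) q (n+1) (h+1)
          = (1 - q^(h+1)) * f 0 q n h + f 0 q n (h+2) := by
        simp [f]
      rw [hf, ih h m h2m, ih (h+2) (m-1) (by push_cast at h2m ⊢; omega)]
      rw [sum_step q (A q (h+1)) n m (by omega)]
      rw [sum_peel q (A q h) n m (by omega)]
      have hterm : ∀ k ∈ Finset.range (n+1),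
          (A q (h+1) (k+1) + A q (h+1) k) * B R n (m - 1 - k)
            = (1 - q^(h+1)) * (A q h (k+1) * B R n (m - 1 - k))
              + A q (h+2) k * B R n (m - 1 - k) := by
        intro k _
        rw [key1]
        ring
      rw [Finset.sum_congr rfl hterm, Finset.sum_add_distrib, key0, mul_add,
        Finset.mul_sum]
      ring

lemma A0_split (q : R) (k : ℕ) :
    A q 0 k = (-1)^k * q^(k*(k+1)/2)
      + (if k = 0 then 0 else (-1)^k * q^(k*(k-1)/2)) := by
  rcases k with _ | k
  · simp [A00]
  · rw [A0_succ, if_neg (Nat.succ_ne_zero k), show k+1+1 = k+2 by omega,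
      Nat.add_sub_cancel]
    ring

end Aux

theorem stmt_17 {R : Type*} [CommRing R] (q : R) (n : ℕ) :
    Etilde 0 q n = ∑ k ∈ Finset.range (n+1),
      (((binom (2*n) ((n:ℤ) - k) - binom (2*n) ((n:ℤ) - k - 1) : ℤ) : R)) *
        (-1)^k * q^(k*(k+1)/2) := by
  have hmain := mainf q (2*n) 0 (n:ℤ) (by push_cast; ring)
  have hE : Etilde 0 q n = f 0 q (2*n) 0 := rfl
  rw [hE, hmain]
  have hsplit : ∀ k ∈ Finset.range (2*n+1),
      A q 0 k * B R (2*n) ((n:ℤ) - k)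
        = (-1)^k * q^(k*(k+1)/2) * B R (2*n) ((n:ℤ) - k)
          + (if k = 0 then 0
              else (-1)^k * q^(k*(k-1)/2) * B R (2*n) ((n:ℤ) - k)) := by
    intro k _
    rw [A0_split]
    rcases Nat.eq_zero_or_pos k with rfl | hk
    · simp
    · rw [if_neg hk.ne', if_neg hk.ne']; ring
  rw [Finset.sum_congr rfl hsplit, Finset.sum_add_distrib]
  have hsecond : (∑ k ∈ Finset.range (2*n+1),
      (if k = 0 then 0 else (-1)^k * q^(k*(k-1)/2) * B R (2*n) ((n:ℤ) - k)))
      = ∑ k ∈ Finset.range (2*n+1),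
          -((-1)^k * q^(k*(k+1)/2) * B R (2*n) ((n:ℤ) - 1 - k)) := by
    rw [Finset.sum_range_succ'
      (fun k => if k = 0 then 0 else (-1)^k * q^(k*(k-1)/2) * B R (2*n) ((n:ℤ) - k)) (2*n)]
    rw [Finset.sum_range_succ
      (fun k => -((-1)^k * q^(k*(k+1)/2) * B R (2*n) ((n:ℤ) - 1 - k))) (2*n)]
    have hz : B R (2*n) ((n:ℤ) - 1 - ((2*n:ℕ):ℤ)) = 0 := B_neg (by push_cast; omega)
    rw [if_pos rfl, hz]
    simp only [mul_zero, neg_zero, add_zero]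
    refine Finset.sum_congr rfl fun k _ => ?_
    rw [if_neg (Nat.succ_ne_zero k), Nat.add_sub_cancel,
      show (k+1)*k/2 = k*(k+1)/2 from by rw [mul_comm],
      show ((n:ℤ) - ((k+1:ℕ):ℤ)) = (n:ℤ) - 1 - k from by push_cast; ring]
    ring
  rw [hsecond]
  rw [show (∑ k ∈ Finset.range (2*n+1),
        -((-1)^k * q^(k*(k+1)/2) * B R (2*n) ((n:ℤ) - 1 - k)))
      = -∑ k ∈ Finset.range (2*n+1),
          (-1)^k * q^(k*(k+1)/2) * B R (2*n) ((n:ℤ) - 1 - k) from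
    Finset.sum_neg_distrib _]
  have tr1 : (∑ k ∈ Finset.range (2*n+1),
        (-1)^k * q^(k*(k+1)/2) * B R (2*n) ((n:ℤ) - k))
      = ∑ k ∈ Finset.range (n+1),
        (-1)^k * q^(k*(k+1)/2) * B R (2*n) ((n:ℤ) - k) := by
    refine (Finset.sum_subset (Finset.range_subset_range.mpr (by omega)) ?_).symm
    intro x _ hx
    have hxn : n + 1 ≤ x := by
      by_contra hc
      exact hx (Finset.mem_range.mpr (by omega))
    rw [B_neg (by push_cast; omega), mul_zero]
  have tr2 : (∑ k ∈ Finset.range (2*n+1),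
        (-1)^k * q^(k*(k+1)/2) * B R (2*n) ((n:ℤ) - 1 - k))
      = ∑ k ∈ Finset.range (n+1),
        (-1)^k * q^(k*(k+1)/2) * B R (2*n) ((n:ℤ) - 1 - k) := by
    refine (Finset.sum_subset (Finset.range_subset_range.mpr (by omega)) ?_).symm
    intro x _ hx
    have hxn : n + 1 ≤ x := by
      by_contra hc
      exact hx (Finset.mem_range.mpr (by omega))
    rw [B_neg (by push_cast; omega), mul_zero]
  rw [tr1, tr2, ← sub_eq_add_neg, ← Finset.sum_sub_distrib]
  refine Finset.sum_congr rfl fun k _ => ?_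
  rw [B, B, show (n:ℤ) - 1 - k = (n:ℤ) - k - 1 from by ring]
  push_cast
  ring
end
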